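/- arXiv:1805.08125 — 6 statements merged into one kernel-verified Lean document; each statement's English description precedes it below -/
import Mathlib

section
/- For the Multiplicative Weights algorithm with K experts, per-round gains gₙⁱ ∈ [0,1], learning rate δ ∈ (0,1), weights initialized to wᵢ₁ = 1 and updated by wⁱₙ₊₁ = wⁱₙ(1 + δ·gⁱₙ), with expected algorithm gain g^alg_n = (Σᵢ wⁱₙ gⁱₙ)/(Σᵢ wⁱₙ): for every expert i, Σₙ₌₁ᴺ g^alg_n ≥ Σₙ₌₁ᴺ gⁱₙ - log(K)/δ - δN. -/
lemma log_one_add_ge (x : ℝ) (hx : 0 ≤ x) : Real.log (1 + x) ≥ x - x ^ 2 := by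
  have h1 : (0:ℝ) < 1 + x := by linarith
  have h2 : Real.log (1 / (1 + x)) ≤ 1 / (1 + x) - 1 :=
    Real.log_le_sub_one_of_pos (by positivity)
  rw [Real.log_div one_ne_zero (ne_of_gt h1), Real.log_one] at h2
  have h3 : Real.log (1 + x) ≥ 1 - 1 / (1 + x) := by linarith
  have h4 : 1 - 1 / (1 + x) = x / (1 + x) := by field_simp; ring
  have h5 : x / (1 + x) ≥ x - x ^ 2 := by
    rw [ge_iff_le, le_div_iff₀ h1]
    nlinarith
  linarith [h4 ▸ h3]

/-- Multiplicative Weights regret bound: for every expert `i`,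
`Σ g^alg_n ≥ Σ gⁱₙ - log K / δ - δ N`. -/
theorem mw_regret_bound
    (K N : ℕ) (hK : 0 < K) (δ : ℝ) (hδ0 : 0 < δ) (hδ1 : δ < 1)
    (g : ℕ → Fin K → ℝ) (hg : ∀ n i, g n i ∈ Set.Icc (0:ℝ) 1)
    (w : ℕ → Fin K → ℝ)
    (hw0 : ∀ i, w 0 i = 1)
    (hwsucc : ∀ n i, w (n+1) i = w n i * (1 + δ * g n i))
    (galg : ℕ → ℝ)
    (hgalg : ∀ n, galg n = (∑ i, w n i * g n i) / (∑ i, w n i))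
    (i : Fin K) :
    ∑ n ∈ Finset.range N, galg n ≥
      ∑ n ∈ Finset.range N, g n i - Real.log K / δ - δ * N := by
  have hpos : ∀ n j, 0 < w n j := by
    intro n
    induction n with
    | zero => intro j; rw [hw0]; norm_num
    | succ n ih =>
      intro j
      rw [hwsucc]
      have := (hg n j).1
      exact mul_pos (ih j) (by nlinarith)
  have hW : ∀ n, 0 < ∑ j, w n j :=
    fun n => Finset.sum_pos (fun j _ => hpos n j) ⟨i, Finset.mem_univ i⟩
  have hgalg0 : ∀ n, 0 ≤ galg n := by
    intro n
    rw [hgalg]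
    apply div_nonneg _ (le_of_lt (hW n))
    exact Finset.sum_nonneg fun j _ => mul_nonneg (le_of_lt (hpos n j)) (hg n j).1
  -- W recursion
  have hWrec : ∀ n, (∑ j, w (n+1) j) = (∑ j, w n j) * (1 + δ * galg n) := by
    intro n
    have hS : galg n * (∑ j, w n j) = ∑ j, w n j * g n j := by
      rw [hgalg, div_mul_cancel₀ _ (ne_of_gt (hW n))]
    calc (∑ j, w (n+1) j) = ∑ j, (w n j + δ * (w n j * g n j)) := by
          apply Finset.sum_congr rfl
          intro j _; rw [hwsucc]; ring
      _ = (∑ j, w n j) + δ * ∑ j, w n j * g n j := by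
          rw [Finset.sum_add_distrib, ← Finset.mul_sum]
      _ = (∑ j, w n j) * (1 + δ * galg n) := by rw [← hS]; ring
  -- log W N = log K + sum of logs
  have hlogW : ∀ n, Real.log (∑ j, w n j) =
      Real.log K + ∑ m ∈ Finset.range n, Real.log (1 + δ * galg m) := by
    intro n
    induction n with
    | zero =>
      simp [hw0]
    | succ n ih =>
      rw [hWrec, Real.log_mul (ne_of_gt (hW n))
        (ne_of_gt (by nlinarith [hgalg0 n])), ih,
        Finset.sum_range_succ]
      ring
  -- upper bound on log W N
  have hub : Real.log (∑ j, w N j) ≤ Real.log K + δ * ∑ n ∈ Finset.range N, galg n := by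
    rw [hlogW]
    have : ∑ m ∈ Finset.range N, Real.log (1 + δ * galg m)
        ≤ ∑ m ∈ Finset.range N, δ * galg m := by
      apply Finset.sum_le_sum
      intro m _
      have := Real.log_le_sub_one_of_pos (x := 1 + δ * galg m) (by nlinarith [hgalg0 m])
      linarith
    rw [Finset.mul_sum]
    linarith
  -- lower bound: w N i
  have hwi : ∀ n, Real.log (w n i) = ∑ m ∈ Finset.range n, Real.log (1 + δ * g m i) := by
    intro n
    induction n with
    | zero => simp [hw0]
    | succ n ih =>
      rw [hwsucc, Real.log_mul (ne_of_gt (hpos n i))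
        (ne_of_gt (by nlinarith [(hg n i).1])), ih, Finset.sum_range_succ]
  have hlb : δ * (∑ n ∈ Finset.range N, g n i) - δ^2 * N ≤ Real.log (w N i) := by
    rw [hwi]
    have : ∑ m ∈ Finset.range N, (δ * g m i - δ^2)
        ≤ ∑ m ∈ Finset.range N, Real.log (1 + δ * g m i) := by
      apply Finset.sum_le_sum
      intro m _
      have h1 := log_one_add_ge (δ * g m i) (by nlinarith [(hg m i).1])
      have h2 := (hg m i).1
      have h3 := (hg m i).2
      have hg2 : (δ * g m i)^2 ≤ δ^2 := by
        nlinarith [mul_nonneg (mul_nonneg (sq_nonneg δ) (by linarith : (0:ℝ) ≤ 1 - g m i))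
          (by linarith : (0:ℝ) ≤ 1 + g m i)]
      linarith
    have heq : ∑ m ∈ Finset.range N, (δ * g m i - δ^2)
        = δ * (∑ n ∈ Finset.range N, g n i) - δ^2 * N := by
      rw [Finset.sum_sub_distrib, ← Finset.mul_sum, Finset.sum_const, Finset.card_range]
      push_cast; ring
    linarith [heq ▸ this]
  have hmono : Real.log (w N i) ≤ Real.log (∑ j, w N j) := by
    apply Real.log_le_log (hpos N i)
    exact Finset.single_le_sum (fun j _ => le_of_lt (hpos N j)) (Finset.mem_univ i)
  have hNn : (0:ℝ) ≤ N := Nat.cast_nonneg N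
  have hchain : δ * (∑ n ∈ Finset.range N, g n i) - δ^2 * N ≤
      Real.log K + δ * ∑ n ∈ Finset.range N, galg n := by linarith
  have hdiv : Real.log K / δ * δ = Real.log K := div_mul_cancel₀ _ (ne_of_gt hδ0)
  rw [ge_iff_le]
  nlinarith [hchain, hdiv]
end

section
/- With learning rate δ = √(log(K)/N), the Multiplicative Weights algorithm with K experts and gains in [0,1] satisfies, for every expert i: (1/N)·Σₙ₌₁ᴺ g^alg_n ≥ (1/N)·Σₙ₌₁ᴺ gⁱₙ - 2√(log(K)/N). -/
private lemma mw_aux_log_lb (x : ℝ) (hx : 0 ≤ x) : x - x^2 ≤ Real.log (1 + x) := by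
  have h1 : (0:ℝ) < 1 + x := by linarith
  have h2 : 1 - (1 + x)⁻¹ ≤ Real.log (1 + x) := Real.one_sub_inv_le_log_of_pos h1
  have h3 : x - x^2 ≤ 1 - (1 + x)⁻¹ := by
    have hinv : (1 + x) * (1 + x)⁻¹ = 1 := mul_inv_cancel₀ h1.ne'
    nlinarith [mul_pos h1 h1, inv_nonneg.mpr h1.le]
  linarith

/-- Multiplicative Weights with tuned learning rate `δ = √(log K / N)`:
for every expert `i`, the average gain of the algorithm is within
`2√(log K / N)` of the average gain of expert `i`. -/
theorem mw_regret_bound_tuned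
    (K N : ℕ) (hK : 1 < K) (hN : 0 < N) (δ : ℝ)
    (hδ : δ = Real.sqrt (Real.log K / N))
    (g : ℕ → Fin K → ℝ) (hg : ∀ n i, g n i ∈ Set.Icc (0:ℝ) 1)
    (w : ℕ → Fin K → ℝ)
    (hw0 : ∀ i, w 0 i = 1)
    (hwsucc : ∀ n i, w (n+1) i = w n i * (1 + δ * g n i))
    (galg : ℕ → ℝ)
    (hgalg : ∀ n, galg n = (∑ i, w n i * g n i) / (∑ i, w n i))
    (i : Fin K) :
    (1 / N : ℝ) * ∑ n ∈ Finset.range N, galg n ≥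
      (1 / N : ℝ) * ∑ n ∈ Finset.range N, g n i - 2 * Real.sqrt (Real.log K / N) := by
  have hNpos : (0:ℝ) < N := by exact_mod_cast hN
  have hlogK : 0 < Real.log K := Real.log_pos (by exact_mod_cast hK)
  have hδpos : 0 < δ := by
    rw [hδ]; exact Real.sqrt_pos.mpr (div_pos hlogK hNpos)
  have hδsq : δ ^ 2 = Real.log K / N := by
    rw [hδ, Real.sq_sqrt (le_of_lt (div_pos hlogK hNpos))]
  -- positivity of weights
  have hwpos : ∀ n i, 0 < w n i := by
    intro n
    induction n with
    | zero => intro j; rw [hw0]; norm_num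
    | succ m ih =>
      intro j
      rw [hwsucc]
      have hgj := hg m j
      exact mul_pos (ih j) (by nlinarith [hgj.1, hδpos])
  have hSpos : ∀ n, 0 < ∑ j, w n j := fun n =>
    Finset.sum_pos (fun j _ => hwpos n j) ⟨i, Finset.mem_univ i⟩
  -- galg bounds
  have hgalg_nonneg : ∀ n, 0 ≤ galg n := by
    intro n
    rw [hgalg]
    apply div_nonneg _ (le_of_lt (hSpos n))
    exact Finset.sum_nonneg fun j _ => mul_nonneg (le_of_lt (hwpos n j)) (hg n j).1
  -- potential recursion
  have hSrec : ∀ n, ∑ j, w (n+1) j = (∑ j, w n j) * (1 + δ * galg n) := by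
    intro n
    rw [hgalg]
    have hS := (hSpos n).ne'
    field_simp
    rw [Finset.mul_sum, ← Finset.sum_add_distrib]
    apply Finset.sum_congr rfl
    intro j _
    rw [hwsucc]
    ring
  -- log of potential
  have hlogS : ∀ n, Real.log (∑ j, w n j) =
      Real.log K + ∑ m ∈ Finset.range n, Real.log (1 + δ * galg m) := by
    intro n
    induction n with
    | zero =>
      simp [hw0]
    | succ m ih =>
      rw [hSrec m, Real.log_mul (hSpos m).ne' (by nlinarith [hgalg_nonneg m]),
        Finset.sum_range_succ, ih]
      ring
  -- log of expert weight
  have hlogw : ∀ n, Real.log (w n i) =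
      ∑ m ∈ Finset.range n, Real.log (1 + δ * g m i) := by
    intro n
    induction n with
    | zero => simp [hw0]
    | succ m ih =>
      rw [hwsucc, Real.log_mul (hwpos m i).ne'
        (by nlinarith [(hg m i).1, hδpos]), Finset.sum_range_succ, ih]
  -- key comparison
  have hkey : Real.log (w N i) ≤ Real.log (∑ j, w N j) := by
    apply Real.log_le_log (hwpos N i)
    exact Finset.single_le_sum (fun j _ => le_of_lt (hwpos N j)) (Finset.mem_univ i)
  rw [hlogw, hlogS] at hkey
  -- per-term bounds
  have hub : ∑ m ∈ Finset.range N, Real.log (1 + δ * galg m) ≤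
      ∑ m ∈ Finset.range N, δ * galg m := by
    apply Finset.sum_le_sum
    intro m _
    have := Real.log_le_sub_one_of_pos (show (0:ℝ) < 1 + δ * galg m by
      nlinarith [hgalg_nonneg m])
    linarith
  have hlb : ∑ m ∈ Finset.range N, (δ * g m i - δ^2) ≤
      ∑ m ∈ Finset.range N, Real.log (1 + δ * g m i) := by
    apply Finset.sum_le_sum
    intro m _
    have hx : 0 ≤ δ * g m i := mul_nonneg hδpos.le (hg m i).1
    have h1 := mw_aux_log_lb (δ * g m i) hx
    have h2 : (δ * g m i)^2 ≤ δ^2 := by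
      have hnn : 0 ≤ δ^2 * ((1 - g m i) * (1 + g m i)) :=
        mul_nonneg (sq_nonneg δ) (mul_nonneg (by linarith [(hg m i).2]) (by linarith [(hg m i).1]))
      nlinarith
    linarith
  have hsum : δ * ∑ m ∈ Finset.range N, g m i - N * δ^2 ≤
      Real.log K + δ * ∑ m ∈ Finset.range N, galg m := by
    have e1 : ∑ m ∈ Finset.range N, (δ * g m i - δ^2) =
        δ * ∑ m ∈ Finset.range N, g m i - N * δ^2 := by
      rw [Finset.sum_sub_distrib, ← Finset.mul_sum, Finset.sum_const,
        Finset.card_range, nsmul_eq_mul]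
    have e2 : ∑ m ∈ Finset.range N, δ * galg m = δ * ∑ m ∈ Finset.range N, galg m :=
      (Finset.mul_sum _ _ _).symm
    rw [e1] at hlb
    rw [e2] at hub
    linarith
  -- finish: N δ² = log K, divide by δ N
  have hNδ2 : (N:ℝ) * δ^2 = Real.log K := by
    rw [hδsq]; field_simp
  rw [← hδ]
  have h2logK : δ * ∑ m ∈ Finset.range N, g m i - 2 * Real.log K ≤
      δ * ∑ m ∈ Finset.range N, galg m := by linarith
  have hδN : 2 * Real.log K = 2 * δ * (δ * N) := by
    have : δ * (δ * N) = Real.log K := by nlinarith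
    linarith
  have hstep : ∑ m ∈ Finset.range N, g m i ≤
      (∑ m ∈ Finset.range N, galg m) + 2 * δ * N := by
    nlinarith [h2logK, hδpos]
  have h5 : ((∑ m ∈ Finset.range N, g m i) - ∑ m ∈ Finset.range N, galg m) / N ≤ 2 * δ := by
    rw [div_le_iff₀ hNpos]; linarith
  have h6 : ((∑ m ∈ Finset.range N, g m i) - ∑ m ∈ Finset.range N, galg m) / N =
      (1 / N : ℝ) * ∑ m ∈ Finset.range N, g m i -
      (1 / N : ℝ) * ∑ m ∈ Finset.range N, galg m := by ring
  linarith
end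

section
/- (Identical-copies Shapley counting) Consider a cooperative game on M+c players where players 1,…,M are 'originals' and players M+1,…,M+c are exact copies of player i, in the sense that v(S ∪ {j}) = v(S ∪ {i}) whenever j is a copy of i and i ∉ S, and v(S ∪ {j}) = v(S) whenever i ∈ S or some copy of i is in S. Then the Shapley value of player i in the extended game satisfies φ̂(i) ≤ (M/(M+c)) · φ(i), where φ(i) is the Shapley value of i in the original M-player game. -/
-- nat factorial inequality
lemma aux_fact (M c t : ℕ) (hM : 0 < M) (ht : t + 1 ≤ M) :
    (M + c - t - 1).factorial * M.factorial ≤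
      M * ((M - t - 1).factorial * (M + c - 1).factorial) := by
  induction c with
  | zero =>
      have h1 : M.factorial = M * (M - 1).factorial := by
        have : M = (M - 1) + 1 := by omega
        conv_lhs => rw [this]
        rw [Nat.factorial_succ]
        congr 1
        omega
      rw [h1]
      have : M + 0 - t - 1 = M - t - 1 := by omega
      have h2 : M + 0 - 1 = M - 1 := by omega
      rw [this, h2]; ring_nf; exact le_refl _
  | succ c ih =>
      have e1 : M + (c + 1) - t - 1 = (M + c - t - 1) + 1 := by omega
      have e2 : M + (c + 1) - 1 = (M + c - 1) + 1 := by omega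
      rw [e1, e2, Nat.factorial_succ, Nat.factorial_succ]
      have h3 : (M + c - t - 1) + 1 ≤ (M + c - 1) + 1 := by omega
      calc ((M + c - t - 1) + 1) * (M + c - t - 1).factorial * M.factorial
          = ((M + c - t - 1) + 1) * ((M + c - t - 1).factorial * M.factorial) := by ring
        _ ≤ ((M + c - 1) + 1) * (M * ((M - t - 1).factorial * (M + c - 1).factorial)) :=
            Nat.mul_le_mul h3 ih
        _ = M * ((M - t - 1).factorial * (((M + c - 1) + 1) * (M + c - 1).factorial)) := by ring

lemma weight_le (M c t : ℕ) (hM : 0 < M) (ht : t + 1 ≤ M) :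
    ((t.factorial * (M + c - t - 1).factorial : ℝ)) / ((M + c).factorial : ℝ)
      ≤ ((M : ℝ) / (M + c)) *
        ((t.factorial * (M - t - 1).factorial : ℝ) / (M.factorial : ℝ)) := by
  have h1 : (0:ℝ) < ((M + c).factorial : ℝ) := by positivity
  have h2 : (0:ℝ) < ((M:ℝ) + c) * (M.factorial : ℝ) := by positivity
  rw [div_mul_div_comm, div_le_div_iff₀ h1 h2]
  have key : (t.factorial * ((M + c - t - 1).factorial * M.factorial) : ℕ) ≤
      t.factorial * (M * ((M - t - 1).factorial * (M + c - 1).factorial)) :=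
    Nat.mul_le_mul_left _ (aux_fact M c t hM ht)
  have keyR : ((t.factorial * ((M + c - t - 1).factorial * M.factorial) : ℕ) : ℝ) ≤
      ((t.factorial * (M * ((M - t - 1).factorial * (M + c - 1).factorial)) : ℕ) : ℝ) := by
    exact_mod_cast key
  push_cast at keyR
  have hf : (((M + c).factorial : ℕ) : ℝ) = ((M:ℝ) + c) * (((M + c - 1).factorial : ℕ) : ℝ) := by
    have : M + c = (M + c - 1) + 1 := by omega
    rw [this, Nat.factorial_succ]
    push_cast
    ring_nf
    rw [Nat.cast_sub (by omega : 1 ≤ M + c)]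
    push_cast; ring
  rw [hf]
  have hc : (0:ℝ) ≤ (M:ℝ) + c := by positivity
  nlinarith [mul_le_mul_of_nonneg_left keyR hc]




/-- The Shapley value of player `m` in the game `v`. -/
noncomputable def shapley {M : ℕ} (v : Finset (Fin M) → ℝ) (m : Fin M) : ℝ :=
  ∑ T ∈ (Finset.univ.erase m).powerset,
    ((T.card.factorial * (M - T.card - 1).factorial : ℝ) / (M.factorial : ℝ)) *
      (v (insert m T) - v T)

/-- Identical-copies Shapley counting: if players `M, …, M+c-1` are exact
copies of original player `i` (copies add the same value as `i` when `i` is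
absent and add nothing once `i` or some copy is present), then the Shapley
value of `i` in the extended game on `M + c` players is at most
`M/(M+c)` times its Shapley value in the original `M`-player game. -/
theorem replicated_shapley_bound (M c : ℕ) (hM : 0 < M)
    (v : Finset (Fin (M + c)) → ℝ)
    (hmono : ∀ S T, S ⊆ T → v S ≤ v T)
    (hnonneg : ∀ S, 0 ≤ v S)
    (i : Fin M)
    (hcopyAdd : ∀ (a : Fin c) (S : Finset (Fin (M + c))),
      Fin.castAdd c i ∉ S →
      v (insert (Fin.natAdd M a) S) = v (insert (Fin.castAdd c i) S))
    (hcopyNull : ∀ (a : Fin c) (S : Finset (Fin (M + c))),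
      (Fin.castAdd c i ∈ S ∨ ∃ b : Fin c, Fin.natAdd M b ∈ S) →
      v (insert (Fin.natAdd M a) S) = v S) :
    shapley v (Fin.castAdd c i) ≤
      ((M : ℝ) / (M + c)) * shapley (fun T => v (T.image (Fin.castAdd c))) i := by
  classical
  have hinj : Function.Injective (Fin.castAdd c : Fin M → Fin (M + c)) :=
    Fin.castAdd_injective M c
  set ii : Fin (M + c) := Fin.castAdd c i with hii_def
  set e : Finset (Fin M) → Finset (Fin (M + c)) := fun A => A.image (Fin.castAdd c) with he
  set f : Finset (Fin (M + c)) → ℝ := fun T =>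
    ((T.card.factorial * (M + c - T.card - 1).factorial : ℝ) / ((M + c).factorial : ℝ)) *
      (v (insert ii T) - v T) with hf
  -- zero marginal contribution when a copy is present
  have hzero : ∀ T : Finset (Fin (M + c)), ii ∉ T →
      (∃ b : Fin c, Fin.natAdd M b ∈ T) → v (insert ii T) - v T = 0 := by
    rintro T hiT ⟨b, hb⟩
    set S := T.erase (Fin.natAdd M b) with hS
    have hiS : ii ∉ S := fun h => hiT (Finset.mem_of_mem_erase h)
    have hT : T = insert (Fin.natAdd M b) S := (Finset.insert_erase hb).symm
    have h1 : v T = v (insert ii S) := by rw [hT]; exact hcopyAdd b S hiS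
    have h3 : v (insert ii T) = v (insert ii S) := by
      have h2 : insert ii T = insert (Fin.natAdd M b) (insert ii S) := by
        rw [hT]; exact Finset.insert_comm _ _ _
      rw [h2]; exact hcopyNull b _ (Or.inl (Finset.mem_insert_self _ _))
    rw [h1, h3]; ring
  have hdec : ∀ j : Fin (M + c),
      (∃ a : Fin M, j = Fin.castAdd c a) ∨ (∃ b : Fin c, j = Fin.natAdd M b) := fun j =>
    Fin.addCases (fun a => Or.inl ⟨a, rfl⟩) (fun b => Or.inr ⟨b, rfl⟩) j
  set P0 := (Finset.univ.erase i).powerset with hP0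
  set P := (Finset.univ.erase ii).powerset with hP
  -- subset
  have hsub : P0.image e ⊆ P := by
    intro T hT
    rcases Finset.mem_image.mp hT with ⟨A, hA, rfl⟩
    rw [hP, Finset.mem_powerset]
    intro x hx
    rcases Finset.mem_image.mp hx with ⟨a, haA, rfl⟩
    have hai : a ≠ i := Finset.ne_of_mem_erase ((Finset.mem_powerset.mp hA) haA)
    exact Finset.mem_erase.mpr ⟨fun h => hai (hinj h), Finset.mem_univ _⟩
  -- outside the image, f vanishes
  have hout : ∀ T ∈ P, T ∉ P0.image e → f T = 0 := by
    intro T hTP hTni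
    have hiT : ii ∉ T := fun h =>
      (Finset.mem_erase.mp ((Finset.mem_powerset.mp hTP) h)).1 rfl
    by_cases hcopy : ∃ b : Fin c, Fin.natAdd M b ∈ T
    · rw [hf]; simp only [hzero T hiT hcopy, mul_zero]
    · exfalso
      apply hTni
      refine Finset.mem_image.mpr ⟨Finset.univ.filter (fun a => Fin.castAdd c a ∈ T), ?_, ?_⟩
      · rw [hP0, Finset.mem_powerset]
        intro a ha
        have haT := (Finset.mem_filter.mp ha).2
        refine Finset.mem_erase.mpr ⟨fun h => ?_, Finset.mem_univ _⟩
        subst h; exact hiT haT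
      · ext j
        simp only [he, Finset.mem_image, Finset.mem_filter, Finset.mem_univ, true_and]
        constructor
        · rintro ⟨a, haT, rfl⟩; exact haT
        · intro hjT
          rcases hdec j with ⟨a, rfl⟩ | ⟨b, rfl⟩
          · exact ⟨a, hjT, rfl⟩
          · exact absurd ⟨b, hjT⟩ hcopy
  have hcard : ∀ A : Finset (Fin M), (e A).card = A.card := fun A =>
    Finset.card_image_of_injective A hinj
  -- rewrite LHS
  have hL : shapley v ii = ∑ A ∈ P0, f (e A) := by
    rw [shapley]
    rw [← Finset.sum_subset hsub hout]
    rw [he]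
    simp only [he]
    exact (Finset.sum_image (f := f) (s := P0) (g := fun A => Finset.image (Fin.castAdd c) A)
      (fun A _ B _ h => (Finset.image_injective hinj) h))
  rw [hL, shapley, Finset.mul_sum]
  apply Finset.sum_le_sum
  intro A hA
  have hAcard : A.card + 1 ≤ M := by
    have h1 : A.card ≤ (Finset.univ.erase i).card := Finset.card_le_card (Finset.mem_powerset.mp hA)
    rw [Finset.card_erase_of_mem (Finset.mem_univ i), Finset.card_univ, Fintype.card_fin] at h1
    omega
  have himg : (insert i A).image (Fin.castAdd c) = insert ii (e A) := by
    rw [he]; simp [Finset.image_insert]; rfl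
  have hΔ : 0 ≤ v (insert ii (e A)) - v (e A) :=
    sub_nonneg.mpr (hmono _ _ (Finset.subset_insert _ _))
  rw [hf]
  simp only [himg, hcard A]
  calc ((A.card.factorial * (M + c - A.card - 1).factorial : ℝ) / ((M + c).factorial : ℝ)) *
        (v (insert ii (e A)) - v (e A))
      ≤ (((M : ℝ) / (M + c)) *
          ((A.card.factorial * (M - A.card - 1).factorial : ℝ) / (M.factorial : ℝ))) *
        (v (insert ii (e A)) - v (e A)) :=
        mul_le_mul_of_nonneg_right (weight_le M c A.card hM hAcard) hΔ
    _ = ((M : ℝ) / (M + c)) *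
        (((A.card.factorial * (M - A.card - 1).factorial : ℝ) / (M.factorial : ℝ)) *
          (v (insert ii (e A)) - v (e A))) := by ring
end

section
/- (Incompatibility of balance and replication-robustness under anonymity) There is no anonymous revenue-division function ψ on cooperative games that simultaneously satisfies: (i) balance, Σₘ ψ(m) = 1; (ii) symmetry, players with identical marginal contributions receive equal shares; and (iii) robustness to replication, i.e., the total share of a seller never strictly increases when the seller adds exact copies of its own feature. Concretely: with two players A, B selling identical features, symmetry and balance force ψ(A) = ψ(B) = 1/2; if A adds one copy A' (indistinguishable from a third identical seller), symmetry and balance force ψ(A) = ψ(B) = ψ(A') = 1/3, so A's total share becomes 2/3 > 1/2, violating robustness. -/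
/-- No anonymous revenue-division scheme can simultaneously satisfy balance,
symmetry and robustness to replication: in the two-player game with identical
features each player gets `1/2`, but after player `A` adds one identical copy,
symmetry and balance force each of the three identical players to get `1/3`,
so `A`'s total share `2/3` strictly exceeds `1/2`. -/
theorem no_anonymous_balanced_robust_division
    (ψ : (n : ℕ) → (Finset (Fin n) → ℝ) → Fin n → ℝ)
    (balance : ∀ n, 0 < n → ∀ v : Finset (Fin n) → ℝ, ∑ m, ψ n v m = 1)
    (symm : ∀ n (v : Finset (Fin n) → ℝ) (a b : Fin n),
      (∀ S : Finset (Fin n), a ∉ S → b ∉ S → v (insert a S) = v (insert b S)) →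
      ψ n v a = ψ n v b) :
    ¬ (ψ 3 (fun S => if S.Nonempty then 1 else 0) 0
        + ψ 3 (fun S => if S.Nonempty then 1 else 0) 2
        ≤ ψ 2 (fun S => if S.Nonempty then 1 else 0) 0) := by
  set v2 : Finset (Fin 2) → ℝ := fun S => if S.Nonempty then 1 else 0 with hv2
  set v3 : Finset (Fin 3) → ℝ := fun S => if S.Nonempty then 1 else 0 with hv3
  have h2 : ψ 2 v2 0 = ψ 2 v2 1 :=
    symm 2 v2 0 1 (by intro S _ _; simp [hv2, Finset.insert_nonempty])
  have hb2 := balance 2 (by norm_num) v2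
  rw [Fin.sum_univ_two] at hb2
  have hψ2 : ψ 2 v2 0 = 1/2 := by linarith
  have h30 : ψ 3 v3 0 = ψ 3 v3 1 :=
    symm 3 v3 0 1 (by intro S _ _; simp [hv3, Finset.insert_nonempty])
  have h31 : ψ 3 v3 1 = ψ 3 v3 2 :=
    symm 3 v3 1 2 (by intro S _ _; simp [hv3, Finset.insert_nonempty])
  have hb3 := balance 3 (by norm_num) v3
  rw [Fin.sum_univ_three] at hb3
  have hψ3 : ψ 3 v3 0 = 1/3 := by linarith
  rw [hψ2, hψ3]
  rw [show ψ 3 v3 2 = 1/3 by linarith]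
  norm_num
end

section
/- If f : ℝ≥0 → ℝ≥0 is differentiable and satisfies (c+1)·f(x+c) ≤ f(x) for all real c > 0 and all x ≥ 0, then f'(x) ≤ −f(x) for all x ≥ 0, and consequently f(x) ≤ f(0)·e^{−x} for all x ≥ 0. -/
/-- If a differentiable nonnegative penalty `f` satisfies the relaxed
robustness condition `(c+1) f(x+c) ≤ f(x)` for all real `c > 0` and `x ≥ 0`,
then `f'(x) ≤ −f(x)` on `x ≥ 0`, and consequently `f(x) ≤ f(0) e^{−x}`. -/
theorem penalty_decay (f : ℝ → ℝ) (hdiff : Differentiable ℝ f)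
    (hf : ∀ x, 0 ≤ x → 0 ≤ f x)
    (hrob : ∀ c : ℝ, 0 < c → ∀ x : ℝ, 0 ≤ x → (c + 1) * f (x + c) ≤ f x) :
    (∀ x, 0 ≤ x → deriv f x ≤ -f x) ∧
    (∀ x, 0 ≤ x → f x ≤ f 0 * Real.exp (-x)) := by
  have hderiv : ∀ x, 0 ≤ x → deriv f x ≤ -f x := by
    intro x hx
    have hslope : Filter.Tendsto (slope f x) (nhdsWithin x (Set.Ioi x)) (nhds (deriv f x)) :=
      (hasDerivAt_iff_tendsto_slope.mp (hdiff x).hasDerivAt).mono_left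
        (nhdsWithin_mono x fun y hy => ne_of_gt hy)
    have hcont : Filter.Tendsto (fun y => -f y) (nhdsWithin x (Set.Ioi x)) (nhds (-f x)) :=
      ((hdiff.continuous.tendsto x).neg).mono_left nhdsWithin_le_nhds
    refine le_of_tendsto_of_tendsto hslope hcont ?_
    filter_upwards [self_mem_nhdsWithin] with y hy
    have hy' : x < y := hy
    have h := hrob (y - x) (by linarith) x hx
    rw [add_sub_cancel] at h
    have : f y - f x ≤ -f y * (y - x) := by nlinarith
    rw [slope_def_field]
    rw [div_le_iff₀ (by linarith : (0:ℝ) < y - x)]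
    linarith [this]
  refine ⟨hderiv, ?_⟩
  intro x hx
  set g : ℝ → ℝ := fun y => f y * Real.exp y with hg
  have hgd : ∀ y, HasDerivAt g ((deriv f y + f y) * Real.exp y) y := by
    intro y
    have : HasDerivAt (fun y => f y * Real.exp y) (deriv f y * Real.exp y + f y * Real.exp y) y :=
      ((hdiff y).hasDerivAt).mul (Real.hasDerivAt_exp y)
    convert this using 1
    ring
  have hanti : AntitoneOn g (Set.Ici (0:ℝ)) := by
    refine antitoneOn_of_deriv_nonpos (convex_Ici 0)
      ((hdiff.continuous.mul Real.continuous_exp).continuousOn) ?_ ?_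
    · intro y hy
      exact ((hgd y).differentiableAt).differentiableWithinAt
    · intro y hy
      rw [(hgd y).deriv]
      have hy0 : 0 ≤ y := le_of_lt (by simpa using hy)
      have := hderiv y hy0
      have := Real.exp_pos y
      nlinarith
  have h := hanti (Set.self_mem_Ici) (Set.mem_Ici.mpr hx) hx
  simp only [hg, Real.exp_zero, mul_one] at h
  rw [Real.exp_neg, ← div_eq_mul_inv, le_div_iff₀ (Real.exp_pos x)]
  linarith
end

section
/- Let ψ̂ approximate the Shapley vector φ with ‖ψ̂ − φ‖_∞ < ε/3 (guaranteed with probability 1−δ when K ≥ M log(2/δ)/(2(ε/3)²)), and define ψ(m) = ψ̂(m)·exp(−λ·Σ_{j≠m} SM(X_m, X_j)) with λ = log 2, where SM is a similarity metric with SM(X,X) = 1 and values in [0,1]. Suppose seller m makes c_m−1 extra copies of its feature and the game is invariant to replication. Then the total allocation to seller m after replication satisfies ψ⁺(m) ≤ ψ(m) + ε. -/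
/-- Robustness to replication of the exponentially down-weighted Shapley
approximation (λ = log 2): if `ψ̂` approximates the true Shapley value `φ(m)`
within `ε/3`, each of the `c` copies of feature `m` has approximate Shapley
value at most `φ(m)/c + ε/3` and cumulative similarity at least `(c−1) + s`
(where `s` is the original cumulative similarity), then the total allocation
to seller `m` after replication is at most its original allocation plus `ε`. -/
theorem robust_shapley_replication_bound
    (c : ℕ) (hc : 1 ≤ c) (ε φm s ψhat : ℝ)
    (hε : 0 < ε) (hφ0 : 0 ≤ φm) (hφ1 : φm ≤ 1) (hs : 0 ≤ s)
    (happrox : |ψhat - φm| < ε / 3)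
    (ψhatPlus simPlus : Fin c → ℝ)
    (hψplus0 : ∀ i, 0 ≤ ψhatPlus i)
    (hψplus : ∀ i, ψhatPlus i ≤ φm / c + ε / 3)
    (hsim : ∀ i, ((c : ℝ) - 1) + s ≤ simPlus i) :
    ∑ i, ψhatPlus i * Real.exp (-(Real.log 2) * simPlus i) ≤
      ψhat * Real.exp (-(Real.log 2) * s) + ε := by
  have hc0 : (0:ℝ) < c := by exact_mod_cast hc
  set E : ℝ := Real.exp (-(Real.log 2) * s) with hEdef
  set t : ℝ := Real.exp (-(Real.log 2) * ((c:ℝ) - 1)) with htdef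
  have hlog2 : (0:ℝ) < Real.log 2 := Real.log_pos (by norm_num)
  have hE0 : 0 < E := Real.exp_pos _
  have hE1 : E ≤ 1 := by
    rw [hEdef]
    apply Real.exp_le_one_iff.mpr
    nlinarith
  have ht0 : 0 < t := Real.exp_pos _
  have ht1 : t ≤ 1 := by
    rw [htdef]
    apply Real.exp_le_one_iff.mpr
    have : (1:ℝ) ≤ c := by exact_mod_cast hc
    nlinarith
  -- key inequality: c * t ≤ 1
  have hct : (c:ℝ) * t ≤ 1 := by
    have hcn : (c:ℝ) - 1 = ((c - 1 : ℕ) : ℝ) := by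
      have := Nat.cast_sub hc (R := ℝ)
      simp [this]
    have ht' : t = ((2:ℝ) ^ (c - 1 : ℕ))⁻¹ := by
      rw [htdef, hcn, neg_mul, Real.exp_neg, mul_comm, Real.exp_nat_mul,
        Real.exp_log (by norm_num : (0:ℝ) < 2)]
    have hpow : (c:ℝ) ≤ (2:ℝ) ^ (c - 1 : ℕ) := by
      have h : c ≤ 2 ^ (c - 1) := by
        have := Nat.lt_two_pow_self (n := c - 1)
        omega
      exact_mod_cast h
    rw [ht', mul_inv_le_iff₀ (by positivity)]
    simpa using hpow
  -- each exp factor is at most t * E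
  have hexp : ∀ i : Fin c, Real.exp (-(Real.log 2) * simPlus i) ≤ t * E := by
    intro i
    rw [htdef, hEdef, ← Real.exp_add]
    apply Real.exp_le_exp.mpr
    have := hsim i
    nlinarith
  have hterm : ∀ i : Fin c,
      ψhatPlus i * Real.exp (-(Real.log 2) * simPlus i) ≤ (φm / c + ε / 3) * (t * E) := by
    intro i
    apply mul_le_mul (hψplus i) (hexp i) (le_of_lt (Real.exp_pos _))
    positivity
  have hsum : ∑ i, ψhatPlus i * Real.exp (-(Real.log 2) * simPlus i) ≤
      (c:ℝ) * ((φm / c + ε / 3) * (t * E)) := by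
    calc ∑ i, ψhatPlus i * Real.exp (-(Real.log 2) * simPlus i)
        ≤ ∑ _i : Fin c, (φm / c + ε / 3) * (t * E) :=
          Finset.sum_le_sum fun i _ => hterm i
      _ = (c:ℝ) * ((φm / c + ε / 3) * (t * E)) := by simp [mul_comm]
  have hψlow : φm - ε / 3 ≤ ψhat := by
    have := abs_lt.mp happrox
    linarith [this.1]
  have hφc : (c:ℝ) * (φm / c) = φm := by field_simp
  have hexpand : (c:ℝ) * ((φm / c + ε / 3) * (t * E)) =
      φm * (t * E) + ((c:ℝ) * t) * (ε / 3) * E := by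
    have : (c:ℝ) * ((φm / c + ε / 3) * (t * E)) =
        ((c:ℝ) * (φm / c)) * (t * E) + ((c:ℝ) * t) * (ε / 3) * E := by ring
    rw [this, hφc]
  have htE : t * E ≤ E := by
    have := mul_le_mul_of_nonneg_right ht1 hE0.le
    linarith
  have h2 : φm * (t * E) ≤ φm * E := mul_le_mul_of_nonneg_left htE hφ0
  have hctE : (c:ℝ) * t * E ≤ 1 := by
    have h := mul_le_mul_of_nonneg_left hE1 (by positivity : (0:ℝ) ≤ (c:ℝ) * t)
    nlinarith
  have h3 : ((c:ℝ) * t) * (ε / 3) * E ≤ ε / 3 := by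
    have h := mul_le_mul_of_nonneg_right hctE (by linarith : (0:ℝ) ≤ ε / 3)
    nlinarith
  have h4 : φm * E ≤ ψhat * E + ε / 3 := by
    have h := mul_le_mul_of_nonneg_right hψlow hE0.le
    have hE3 : (ε / 3) * E ≤ ε / 3 := by
      have := mul_le_mul_of_nonneg_left hE1 (by linarith : (0:ℝ) ≤ ε / 3)
      linarith
    nlinarith
  linarith [hsum, hexpand ▸ (le_refl ((c:ℝ) * ((φm / c + ε / 3) * (t * E))))]
end
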